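/- Let q be a prime and suppose h ≥ 0, l ≥ 0 are integers and m_1, …, m_l ≥ 2 are integers each dividing 5q, satisfying 2/5 = 2h − 2 + Σ_{i=1}^l (1 − 1/m_i), with q ≥ 7. Then h = 0, l = 3 and m_1 = m_2 = m_3 = 5. -/
import Mathlib


/-- Riemann–Hurwitz constraint for a group of order 5q: the only solution of
2/5 = 2h − 2 + Σ (1 − 1/m_i), with each m_i ≥ 2 dividing 5q and q ≥ 7 prime,
is h = 0, l = 3 and m_1 = m_2 = m_3 = 5. -/
theorem stmt_2 {q : ℕ} (hq : q.Prime) (hq7 : 7 ≤ q)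
    (h l : ℕ) (m : Fin l → ℕ)
    (hm2 : ∀ i, 2 ≤ m i) (hmdvd : ∀ i, m i ∣ 5 * q)
    (heq : (2 : ℚ) / 5 = 2 * (h : ℚ) - 2 + ∑ i, (1 - 1 / (m i : ℚ))) :
    h = 0 ∧ l = 3 ∧ ∀ i, m i = 5 := by
  have h5p : Nat.Prime 5 := by norm_num
  have hcases : ∀ i, m i = 5 ∨ m i = q ∨ m i = 5 * q := by
    intro i
    have hd := hmdvd i
    by_cases h5 : 5 ∣ m i
    · obtain ⟨e, he⟩ := h5
      have he' : e ∣ q := by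
        have h2 : 5 * e ∣ 5 * q := he ▸ hd
        exact (mul_dvd_mul_iff_left (by norm_num : (5:ℕ) ≠ 0)).mp h2
      rcases (hq.eq_one_or_self_of_dvd _ he') with rfl | rfl
      · left; omega
      · right; right; omega
    · have hcop : Nat.Coprime (m i) 5 :=
        Nat.coprime_comm.mp ((h5p.coprime_iff_not_dvd).mpr h5)
      have hmq : m i ∣ q := hcop.dvd_of_dvd_mul_left hd
      rcases (hq.eq_one_or_self_of_dvd _ hmq) with h1 | h1
      · have := hm2 i; omega
      · right; left; exact h1
  have hge5 : ∀ i, 5 ≤ m i := by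
    intro i; rcases hcases i with h1 | h1 | h1 <;> nlinarith
  have hpos : ∀ i, (0:ℚ) < 1 / (m i : ℚ) := by
    intro i
    have : (0:ℚ) < (m i : ℚ) := by
      have := hge5 i; exact_mod_cast by omega
    positivity
  have hle : ∀ i, (1:ℚ) / (m i : ℚ) ≤ 1 / 5 := by
    intro i
    apply one_div_le_one_div_of_le (by norm_num)
    exact_mod_cast hge5 i
  set T := ∑ i, 1 / (m i : ℚ) with hT
  have hsum : ∑ i, ((1:ℚ) - 1 / (m i : ℚ)) = (l : ℚ) - T := by
    rw [Finset.sum_sub_distrib, hT]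
    simp [one_div]
  rw [hsum] at heq
  have hTle : T ≤ (l : ℚ) / 5 := by
    calc T ≤ ∑ _i : Fin l, (1:ℚ)/5 := Finset.sum_le_sum (fun i _ => hle i)
    _ = (l:ℚ)/5 := by simp [Finset.sum_const]; ring
  have hTge : 0 ≤ T := Finset.sum_nonneg (fun i _ => (hpos i).le)
  have hTval : T = 2 * (h:ℚ) + (l:ℚ) - 12/5 := by linarith
  have hn1 : 10 * h + 4 * l ≤ 12 := by
    have : (10 * h + 4 * l : ℚ) ≤ 12 := by linarith
    exact_mod_cast this
  have hn2 : 12 ≤ 10 * h + 5 * l := by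
    have : (12:ℚ) ≤ 10 * h + 5 * l := by linarith
    exact_mod_cast this
  have hh : h = 0 := by omega
  have hl : l = 3 := by omega
  subst hh hl
  refine ⟨rfl, rfl, ?_⟩
  by_contra hc
  push_neg at hc
  obtain ⟨j, hj⟩ := hc
  have hjlt : (1:ℚ) / (m j : ℚ) < 1/5 := by
    have h7 : 7 ≤ m j := by
      rcases hcases j with h1 | h1 | h1
      · exact absurd h1 hj
      · omega
      · nlinarith
    apply one_div_lt_one_div_of_lt (by norm_num)
    exact_mod_cast by omega
  have hlt : T < ∑ _i : Fin 3, (1:ℚ)/5 :=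
    Finset.sum_lt_sum (fun i _ => hle i) ⟨j, Finset.mem_univ j, hjlt⟩
  rw [hTval] at hlt
  norm_num at hlt
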